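/- Let L be a Lie algebra with triality over a field of characteristic ≠ 2,3 and H = {x ∈ L : x^σ = -x}. Define a * b = [a + 2a^ρ, b] for a, b ∈ H. Then H is closed under *, the product * is anticommutative on H (a*b = -b*a), and H with * satisfies the Malcev identity (x*y)*(x*z) = ((x*y)*z)*x + ((y*z)*x)*x + ((z*x)*x)*y. -/

import Mathlib

/-- The Malcev product a * b = [a + 2a^ρ, b] on the (-1)-eigenspace H of σ. -/
noncomputable def mstar {F : Type*} [Field F] {L : Type*} [LieRing L] [LieAlgebra F L]
    (ρ : L ≃ₗ⁅F⁆ L) (a b : L) : L :=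
  ⁅a + (2 : F) • ρ a, b⁆

set_option maxHeartbeats 4000000

/-- In a Lie algebra with triality over a field of characteristic ≠ 2,3,
    the (-1)-eigenspace H of σ is closed under a * b = [a + 2a^ρ, b], the product *
    is anticommutative on H, and H with * satisfies the Malcev identity. -/
theorem lie_triality_malcev (F : Type*) [Field F] (h2 : (2 : F) ≠ 0) (h3 : (3 : F) ≠ 0)
    (L : Type*) [LieRing L] [LieAlgebra F L] (ρ σ : L ≃ₗ⁅F⁆ L)
    (hρ : ∀ x : L, ρ (ρ (ρ x)) = x) (hσ : ∀ x : L, σ (σ x) = x)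
    (hρσ : ∀ x : L, ρ (σ (ρ (σ x))) = x)
    (htri : ∀ x : L, (σ x - x) + ρ (σ x - x) + ρ (ρ (σ x - x)) = 0) :
    (∀ x y : L, σ x = -x → σ y = -y → σ (mstar ρ x y) = -(mstar ρ x y)) ∧
    (∀ x y : L, σ x = -x → σ y = -y → mstar ρ x y = -(mstar ρ y x)) ∧
    (∀ x y z : L, σ x = -x → σ y = -y → σ z = -z →
      mstar ρ (mstar ρ x y) (mstar ρ x z) =
        mstar ρ (mstar ρ (mstar ρ x y) z) x + mstar ρ (mstar ρ (mstar ρ y z) x) x +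
          mstar ρ (mstar ρ (mstar ρ z x) x) y) := by
  have ρadd : ∀ a b : L, ρ (a + b) = ρ a + ρ b := fun a b => by
    rw [← LieEquiv.coe_toLinearEquiv]; exact map_add _ a b
  have ρsmul : ∀ (t : F) (a : L), ρ (t • a) = t • ρ a := fun t a => by
    rw [← LieEquiv.coe_toLinearEquiv]; exact map_smul _ t a
  have ρneg : ∀ a : L, ρ (-a) = -ρ a := fun a => by
    rw [← LieEquiv.coe_toLinearEquiv]; exact map_neg _ a
  have ρsub : ∀ a b : L, ρ (a - b) = ρ a - ρ b := fun a b => by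
    rw [← LieEquiv.coe_toLinearEquiv]; exact map_sub _ a b
  have σadd : ∀ a b : L, σ (a + b) = σ a + σ b := fun a b => by
    rw [← LieEquiv.coe_toLinearEquiv]; exact map_add _ a b
  have σsmul : ∀ (t : F) (a : L), σ (t • a) = t • σ a := fun t a => by
    rw [← LieEquiv.coe_toLinearEquiv]; exact map_smul _ t a
  have σneg : ∀ a : L, σ (-a) = -σ a := fun a => by
    rw [← LieEquiv.coe_toLinearEquiv]; exact map_neg _ a
  have σsub : ∀ a b : L, σ (a - b) = σ a - σ b := fun a b => by
    rw [← LieEquiv.coe_toLinearEquiv]; exact map_sub _ a b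
  -- ρ² = -1 - ρ on H
  have hρρ : ∀ a : L, σ a = -a → ρ (ρ a) = -a - ρ a := by
    intro a ha
    have h := htri a
    rw [ha] at h
    have e : (-a - a) = (2:F) • (-a) := by
      rw [two_smul]; abel
    rw [e, ρsmul, ρsmul, ρneg, ρneg] at h
    have h' : (2:F) • (a + ρ a + ρ (ρ a)) = 0 := by
      linear_combination (norm := module) -h
    rcases smul_eq_zero.mp h' with hc | hv
    · exact absurd hc h2
    · linear_combination (norm := module) hv
  -- σ ∘ ρ on H
  have hσρ : ∀ a : L, σ a = -a → σ (ρ a) = a + ρ a := by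
    intro a ha
    have h := hρσ a
    rw [ha, ρneg, σneg, ρneg] at h
    have hw : ρ (σ (ρ a)) = -a := by linear_combination (norm := module) -h
    calc σ (ρ a) = ρ (ρ (ρ (σ (ρ a)))) := (hρ _).symm
      _ = ρ (ρ (-a)) := by rw [hw]
      _ = a + ρ a := by rw [ρneg, ρneg, hρρ a ha]; abel
  -- key B relation
  have hB : ∀ a b : L, σ a = -a → σ b = -b → ⁅ρ a, b⁆ = ⁅a, ρ b⁆ := by
    intro a b ha hb
    set w : L := ⁅ρ a, b⁆ - ⁅a, ρ b⁆ with hw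
    have hσw : σ w = -w := by
      rw [hw, σsub, LieEquiv.map_lie, LieEquiv.map_lie, hσρ a ha, hσρ b hb, ha, hb]
      simp only [add_lie, lie_add, neg_lie, lie_neg]
      module
    have hρw : ρ w = w := by
      rw [hw, ρsub, LieEquiv.map_lie, LieEquiv.map_lie, hρρ a ha, hρρ b hb]
      simp only [sub_lie, lie_sub, neg_lie, lie_neg]
      abel
    have h3w : (3:F) • w = 0 := by
      have h := hρρ w hσw
      rw [hρw, hρw] at h
      linear_combination (norm := module) h
    have hw0 : w = 0 := by
      rcases smul_eq_zero.mp h3w with hc | hv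
      · exact absurd hc h3
      · exact hv
    have := sub_eq_zero.mp (hw ▸ hw0)
    exact this
  have hcl : ∀ a b : L, σ a = -a → σ b = -b → σ (mstar ρ a b) = -(mstar ρ a b) := by
    intro a b ha hb
    simp only [mstar]
    rw [LieEquiv.map_lie, σadd, σsmul, hσρ a ha, ha, hb]
    simp only [add_lie, lie_add, neg_lie, lie_neg, smul_lie, lie_smul, smul_add, smul_neg]
    module
  have hρm : ∀ a b : L, σ a = -a →
      ρ ⁅a + (2:F) • ρ a, b⁆ = -((2:F) • ⁅a, ρ b⁆) - ⁅ρ a, ρ b⁆ := by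
    intro a b ha
    rw [LieEquiv.map_lie, ρadd, ρsmul, hρρ a ha]
    simp only [add_lie, sub_lie, neg_lie, smul_lie, lie_smul, smul_sub, smul_neg]
    module
  refine ⟨hcl, ?_, ?_⟩
  · intro x y hx hy
    simp only [mstar]
    linear_combination (norm := (simp only [add_lie, lie_add, neg_lie, lie_neg, smul_lie,
      lie_smul, smul_add, smul_neg]; module)) (2:F) • hB x y hx hy - lie_skew x y -
      (2:F) • lie_skew x (ρ y)
  · intro x y z hx hy hz
    have pxy : σ ⁅x + (2 : F) • ρ x, y⁆ = -⁅x + (2 : F) • ρ x, y⁆ := hcl x y hx hy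
    have pyz : σ ⁅y + (2 : F) • ρ y, z⁆ = -⁅y + (2 : F) • ρ y, z⁆ := hcl y z hy hz
    have pzx : σ ⁅z + (2 : F) • ρ z, x⁆ = -⁅z + (2 : F) • ρ z, x⁆ := hcl z x hz hx
    have aux94 : ⁅⁅⁅ρ x, x⁆, y⁆, z⁆ = ⁅⁅⁅x, ρ x⁆, y⁆, z⁆ := by rw [hB x x hx hx]
    have aux95 : ⁅y, ⁅⁅ρ x, x⁆, z⁆⁆ = ⁅y, ⁅⁅x, ρ x⁆, z⁆⁆ := by rw [hB x x hx hx]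
    have aux96 : ⁅⁅⁅ρ x, x⁆, y⁆, ρ z⁆ = ⁅⁅⁅x, ρ x⁆, y⁆, ρ z⁆ := by rw [hB x x hx hx]
    have aux97 : ⁅y, ⁅⁅ρ x, x⁆, ρ z⁆⁆ = ⁅y, ⁅⁅x, ρ x⁆, ρ z⁆⁆ := by rw [hB x x hx hx]
    have aux98 : ⁅⁅⁅ρ x, x⁆, z⁆, ρ y⁆ = ⁅⁅⁅x, ρ x⁆, z⁆, ρ y⁆ := by rw [hB x x hx hx]
    have aux99 : ⁅z, ⁅⁅ρ x, x⁆, ρ y⁆⁆ = ⁅z, ⁅⁅x, ρ x⁆, ρ y⁆⁆ := by rw [hB x x hx hx]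
    have aux100 : ⁅⁅⁅ρ x, x⁆, ρ y⁆, ρ z⁆ = ⁅⁅⁅x, ρ x⁆, ρ y⁆, ρ z⁆ := by rw [hB x x hx hx]
    have aux101 : ⁅ρ y, ⁅⁅ρ x, x⁆, ρ z⁆⁆ = ⁅ρ y, ⁅⁅x, ρ x⁆, ρ z⁆⁆ := by rw [hB x x hx hx]
    have aux102 : ⁅⁅⁅ρ x, y⁆, x⁆, z⁆ = ⁅⁅⁅x, ρ y⁆, x⁆, z⁆ := by rw [hB x y hx hy]
    have aux103 : ⁅x, ⁅⁅ρ x, y⁆, z⁆⁆ = ⁅x, ⁅⁅x, ρ y⁆, z⁆⁆ := by rw [hB x y hx hy]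
    have aux104 : ⁅⁅⁅ρ x, y⁆, x⁆, ρ z⁆ = ⁅⁅⁅x, ρ y⁆, x⁆, ρ z⁆ := by rw [hB x y hx hy]
    have aux105 : ⁅x, ⁅⁅ρ x, y⁆, ρ z⁆⁆ = ⁅x, ⁅⁅x, ρ y⁆, ρ z⁆⁆ := by rw [hB x y hx hy]
    have aux106 : ⁅⁅⁅ρ x, y⁆, z⁆, ρ x⁆ = ⁅⁅⁅x, ρ y⁆, z⁆, ρ x⁆ := by rw [hB x y hx hy]
    have aux107 : ⁅z, ⁅⁅ρ x, y⁆, ρ x⁆⁆ = ⁅z, ⁅⁅x, ρ y⁆, ρ x⁆⁆ := by rw [hB x y hx hy]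
    have aux108 : ⁅⁅⁅ρ x, y⁆, ρ x⁆, ρ z⁆ = ⁅⁅⁅x, ρ y⁆, ρ x⁆, ρ z⁆ := by rw [hB x y hx hy]
    have aux109 : ⁅ρ x, ⁅⁅ρ x, y⁆, ρ z⁆⁆ = ⁅ρ x, ⁅⁅x, ρ y⁆, ρ z⁆⁆ := by rw [hB x y hx hy]
    have aux110 : ⁅⁅⁅ρ x, z⁆, x⁆, y⁆ = ⁅⁅⁅x, ρ z⁆, x⁆, y⁆ := by rw [hB x z hx hz]
    have aux111 : ⁅x, ⁅⁅ρ x, z⁆, y⁆⁆ = ⁅x, ⁅⁅x, ρ z⁆, y⁆⁆ := by rw [hB x z hx hz]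
    have aux112 : ⁅⁅⁅ρ x, z⁆, x⁆, ρ y⁆ = ⁅⁅⁅x, ρ z⁆, x⁆, ρ y⁆ := by rw [hB x z hx hz]
    have aux113 : ⁅x, ⁅⁅ρ x, z⁆, ρ y⁆⁆ = ⁅x, ⁅⁅x, ρ z⁆, ρ y⁆⁆ := by rw [hB x z hx hz]
    have aux114 : ⁅⁅⁅ρ x, z⁆, y⁆, ρ x⁆ = ⁅⁅⁅x, ρ z⁆, y⁆, ρ x⁆ := by rw [hB x z hx hz]
    have aux115 : ⁅⁅⁅ρ x, z⁆, ρ x⁆, ρ y⁆ = ⁅⁅⁅x, ρ z⁆, ρ x⁆, ρ y⁆ := by rw [hB x z hx hz]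
    have aux116 : ⁅⁅⁅ρ y, z⁆, x⁆, x⁆ = ⁅⁅⁅y, ρ z⁆, x⁆, x⁆ := by rw [hB y z hy hz]
    have aux117 : ⁅⁅⁅ρ y, z⁆, x⁆, ρ x⁆ = ⁅⁅⁅y, ρ z⁆, x⁆, ρ x⁆ := by rw [hB y z hy hz]
    have aux118 : ⁅⁅⁅ρ y, z⁆, ρ x⁆, ρ x⁆ = ⁅⁅⁅y, ρ z⁆, ρ x⁆, ρ x⁆ := by rw [hB y z hy hz]
    have r3xyx : ⁅-((2 : F) • ⁅x, ρ y⁆) - ⁅ρ x, ρ y⁆, x⁆ = ⁅⁅x + (2 : F) • ρ x, y⁆, ρ x⁆ := by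
      have r := hB (mstar ρ x y) x (hcl x y hx hy) hx
      simp only [mstar] at r
      rw [hρm x y hx] at r
      exact r
    have aux119 : ⁅⁅-((2 : F) • ⁅x, ρ y⁆) - ⁅ρ x, ρ y⁆, x⁆, z⁆ = ⁅⁅⁅x + (2 : F) • ρ x, y⁆, ρ x⁆, z⁆ := by rw [r3xyx]
    have aux120 : ⁅⁅-((2 : F) • ⁅x, ρ y⁆) - ⁅ρ x, ρ y⁆, x⁆, ρ z⁆ = ⁅⁅⁅x + (2 : F) • ρ x, y⁆, ρ x⁆, ρ z⁆ := by rw [r3xyx]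
    have r3xyz : ⁅-((2 : F) • ⁅x, ρ y⁆) - ⁅ρ x, ρ y⁆, z⁆ = ⁅⁅x + (2 : F) • ρ x, y⁆, ρ z⁆ := by
      have r := hB (mstar ρ x y) z (hcl x y hx hy) hz
      simp only [mstar] at r
      rw [hρm x y hx] at r
      exact r
    have aux121 : ⁅⁅-((2 : F) • ⁅x, ρ y⁆) - ⁅ρ x, ρ y⁆, z⁆, x⁆ = ⁅⁅⁅x + (2 : F) • ρ x, y⁆, ρ z⁆, x⁆ := by rw [r3xyz]
    have aux122 : ⁅⁅-((2 : F) • ⁅x, ρ y⁆) - ⁅ρ x, ρ y⁆, z⁆, ρ x⁆ = ⁅⁅⁅x + (2 : F) • ρ x, y⁆, ρ z⁆, ρ x⁆ := by rw [r3xyz]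
    have r3xzx : ⁅-((2 : F) • ⁅x, ρ z⁆) - ⁅ρ x, ρ z⁆, x⁆ = ⁅⁅x + (2 : F) • ρ x, z⁆, ρ x⁆ := by
      have r := hB (mstar ρ x z) x (hcl x z hx hz) hx
      simp only [mstar] at r
      rw [hρm x z hx] at r
      exact r
    have aux123 : ⁅⁅-((2 : F) • ⁅x, ρ z⁆) - ⁅ρ x, ρ z⁆, x⁆, y⁆ = ⁅⁅⁅x + (2 : F) • ρ x, z⁆, ρ x⁆, y⁆ := by rw [r3xzx]
    have aux124 : ⁅⁅-((2 : F) • ⁅x, ρ z⁆) - ⁅ρ x, ρ z⁆, x⁆, ρ y⁆ = ⁅⁅⁅x + (2 : F) • ρ x, z⁆, ρ x⁆, ρ y⁆ := by rw [r3xzx]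
    have r3xzy : ⁅-((2 : F) • ⁅x, ρ z⁆) - ⁅ρ x, ρ z⁆, y⁆ = ⁅⁅x + (2 : F) • ρ x, z⁆, ρ y⁆ := by
      have r := hB (mstar ρ x z) y (hcl x z hx hz) hy
      simp only [mstar] at r
      rw [hρm x z hx] at r
      exact r
    have aux125 : ⁅⁅-((2 : F) • ⁅x, ρ z⁆) - ⁅ρ x, ρ z⁆, y⁆, x⁆ = ⁅⁅⁅x + (2 : F) • ρ x, z⁆, ρ y⁆, x⁆ := by rw [r3xzy]
    have aux126 : ⁅⁅-((2 : F) • ⁅x, ρ z⁆) - ⁅ρ x, ρ z⁆, y⁆, ρ x⁆ = ⁅⁅⁅x + (2 : F) • ρ x, z⁆, ρ y⁆, ρ x⁆ := by rw [r3xzy]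
    have aux127 := hB (mstar ρ x y) (mstar ρ x z) (hcl x y hx hy) (hcl x z hx hz)
    simp only [mstar] at aux127
    rw [hρm x y hx, hρm x z hx] at aux127
    have aux128 := hB (mstar ρ (mstar ρ x y) x) z (hcl (mstar ρ x y) x (hcl x y hx hy) hx) hz
    simp only [mstar] at aux128
    rw [hρm ⁅x + (2 : F) • ρ x, y⁆ x (hcl x y hx hy), hρm x y hx] at aux128
    simp only [mstar]
    rw [hρm ⁅x + (2 : F) • ρ x, y⁆ z pxy, hρm ⁅y + (2 : F) • ρ y, z⁆ x pyz,
      hρm ⁅z + (2 : F) • ρ z, x⁆ x pzx, hρm x y hx, hρm y z hy, hρm z x hz]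
    apply smul_right_injective L h3
    linear_combination (norm := (simp only [lie_lie, lie_add, add_lie, lie_sub, sub_lie, lie_neg, neg_lie, lie_smul, smul_lie, smul_add, smul_sub, smul_neg, smul_smul, neg_neg]; module))
      (-6 : F) • (lie_jacobi ⁅x, x⁆ (ρ z) y) +
      (40 : F) • (lie_jacobi ⁅x, x⁆ (ρ z) (ρ y)) +
      (-18 : F) • (lie_jacobi ⁅x, y⁆ x (ρ z)) +
      (-18 : F) • (lie_jacobi ⁅x, y⁆ z (ρ x)) +
      (30 : F) • (lie_jacobi ⁅x, y⁆ (ρ x) z) +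
      (18 : F) • (lie_jacobi ⁅x, y⁆ (ρ z) x) +
      (-2 : F) • (lie_jacobi ⁅x, y⁆ (ρ z) (ρ x)) +
      (3 : F) • (lie_jacobi ⁅x, z⁆ x y) +
      (-3 : F) • (lie_jacobi ⁅x, z⁆ y x) +
      (28 : F) • (lie_jacobi ⁅x, z⁆ y (ρ x)) +
      (-24 : F) • (lie_jacobi ⁅x, z⁆ (ρ x) y) +
      (-12 : F) • (lie_jacobi ⁅x, z⁆ (ρ x) (ρ y)) +
      (-2 : F) • (lie_jacobi ⁅x, z⁆ (ρ y) (ρ x)) +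
      (-8 : F) • (lie_jacobi ⁅x, ρ x⁆ y z) +
      (4 : F) • (lie_jacobi ⁅x, ρ x⁆ y (ρ z)) +
      (18 : F) • (lie_jacobi ⁅x, ρ x⁆ z y) +
      (-110 : F) • (lie_jacobi ⁅x, ρ x⁆ z (ρ y)) +
      (6 : F) • (lie_jacobi ⁅x, ρ x⁆ (ρ z) y) +
      (58 : F) • (lie_jacobi ⁅x, ρ y⁆ x (ρ z)) +
      (-38 : F) • (lie_jacobi ⁅x, ρ y⁆ z (ρ x)) +
      (-72 : F) • (lie_jacobi ⁅x, ρ y⁆ (ρ x) z) +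
      (-8 : F) • (lie_jacobi ⁅x, ρ y⁆ (ρ x) (ρ z)) +
      (-58 : F) • (lie_jacobi ⁅x, ρ y⁆ (ρ z) x) +
      (8 : F) • (lie_jacobi ⁅x, ρ y⁆ (ρ z) (ρ x)) +
      (18 : F) • (lie_jacobi ⁅x, ρ z⁆ x y) +
      (-6 : F) • (lie_jacobi ⁅x, ρ z⁆ x (ρ y)) +
      (-18 : F) • (lie_jacobi ⁅x, ρ z⁆ y x) +
      (22 : F) • (lie_jacobi ⁅x, ρ z⁆ y (ρ x)) +
      (-18 : F) • (lie_jacobi ⁅x, ρ z⁆ (ρ x) y) +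
      (6 : F) • (lie_jacobi ⁅x, ρ z⁆ (ρ y) x) +
      (-8 : F) • (lie_jacobi ⁅x, ρ z⁆ (ρ y) (ρ x)) +
      (-6 : F) • (lie_jacobi ⁅y, x⁆ z (ρ x)) +
      (8 : F) • (lie_jacobi ⁅y, x⁆ (ρ x) z) +
      (6 : F) • (lie_jacobi ⁅y, x⁆ (ρ z) x) +
      (-12 : F) • (lie_jacobi ⁅y, x⁆ (ρ z) (ρ x)) +
      (-8 : F) • (lie_jacobi ⁅y, z⁆ x (ρ x)) +
      (4 : F) • (lie_jacobi ⁅y, z⁆ (ρ x) x) +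
      (8 : F) • (lie_jacobi ⁅y, z⁆ (ρ x) (ρ x)) +
      (-12 : F) • (lie_jacobi ⁅y, ρ x⁆ x z) +
      (-4 : F) • (lie_jacobi ⁅y, ρ x⁆ x (ρ z)) +
      (2 : F) • (lie_jacobi ⁅y, ρ x⁆ z x) +
      (-16 : F) • (lie_jacobi ⁅y, ρ x⁆ z (ρ x)) +
      (8 : F) • (lie_jacobi ⁅y, ρ x⁆ (ρ x) z) +
      (6 : F) • (lie_jacobi ⁅y, ρ x⁆ (ρ x) (ρ z)) +
      (-6 : F) • (lie_jacobi ⁅y, ρ x⁆ (ρ z) x) +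
      (20 : F) • (lie_jacobi ⁅y, ρ z⁆ x (ρ x)) +
      (-24 : F) • (lie_jacobi ⁅y, ρ z⁆ (ρ x) x) +
      (6 : F) • (lie_jacobi ⁅y, ρ z⁆ (ρ x) (ρ x)) +
      (4 : F) • (lie_jacobi ⁅z, x⁆ y (ρ x)) +
      (-12 : F) • (lie_jacobi ⁅z, x⁆ (ρ x) y) +
      (96 : F) • (lie_jacobi ⁅z, x⁆ (ρ y) (ρ x)) +
      (-4 : F) • (lie_jacobi ⁅z, y⁆ x (ρ x)) +
      (-8 : F) • (lie_jacobi ⁅z, y⁆ (ρ x) x) +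
      (12 : F) • (lie_jacobi ⁅z, y⁆ (ρ x) (ρ x)) +
      (146 : F) • (lie_jacobi ⁅z, ρ x⁆ x (ρ y)) +
      (32 : F) • (lie_jacobi ⁅z, ρ x⁆ y (ρ x)) +
      (-24 : F) • (lie_jacobi ⁅z, ρ x⁆ (ρ x) y) +
      (12 : F) • (lie_jacobi ⁅z, ρ x⁆ (ρ x) (ρ y)) +
      (-36 : F) • (lie_jacobi ⁅z, ρ x⁆ (ρ y) x) +
      (12 : F) • (lie_jacobi ⁅z, ρ x⁆ (ρ y) (ρ x)) +
      (20 : F) • (lie_jacobi ⁅z, ρ y⁆ x (ρ x)) +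
      (90 : F) • (lie_jacobi ⁅z, ρ y⁆ (ρ x) x) +
      (12 : F) • (lie_jacobi ⁅z, ρ y⁆ (ρ x) (ρ x)) +
      (4 : F) • (lie_jacobi ⁅ρ x, x⁆ y (ρ z)) +
      (6 : F) • (lie_jacobi ⁅ρ x, x⁆ z y) +
      (-110 : F) • (lie_jacobi ⁅ρ x, x⁆ z (ρ y)) +
      (14 : F) • (lie_jacobi ⁅ρ x, x⁆ (ρ y) z) +
      (8 : F) • (lie_jacobi ⁅ρ x, x⁆ (ρ z) y) +
      (-4 : F) • (lie_jacobi ⁅ρ x, y⁆ x (ρ z)) +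
      (-4 : F) • (lie_jacobi ⁅ρ x, y⁆ z (ρ x)) +
      (-8 : F) • (lie_jacobi ⁅ρ x, y⁆ (ρ x) z) +
      (6 : F) • (lie_jacobi ⁅ρ x, y⁆ (ρ x) (ρ z)) +
      (6 : F) • (lie_jacobi ⁅ρ x, y⁆ (ρ z) x) +
      (-6 : F) • (lie_jacobi ⁅ρ x, y⁆ (ρ z) (ρ x)) +
      (62 : F) • (lie_jacobi ⁅ρ x, z⁆ x (ρ y)) +
      (-8 : F) • (lie_jacobi ⁅ρ x, z⁆ y (ρ x)) +
      (-12 : F) • (lie_jacobi ⁅ρ x, z⁆ (ρ x) (ρ y)) +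
      (-48 : F) • (lie_jacobi ⁅ρ x, z⁆ (ρ y) x) +
      (12 : F) • (lie_jacobi ⁅ρ x, z⁆ (ρ y) (ρ x)) +
      (-12 : F) • (lie_jacobi ⁅ρ x, ρ x⁆ y (ρ z)) +
      (-24 : F) • (lie_jacobi ⁅ρ x, ρ x⁆ z (ρ y)) +
      (6 : F) • (lie_jacobi ⁅ρ x, ρ x⁆ (ρ z) y) +
      (8 : F) • (lie_jacobi ⁅ρ x, ρ y⁆ x (ρ z)) +
      (-12 : F) • (lie_jacobi ⁅ρ x, ρ y⁆ z (ρ x)) +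
      (-8 : F) • (lie_jacobi ⁅ρ x, ρ y⁆ (ρ z) x) +
      (6 : F) • (lie_jacobi ⁅ρ x, ρ z⁆ x (ρ y)) +
      (-6 : F) • (lie_jacobi ⁅ρ x, ρ z⁆ y (ρ x)) +
      (2 : F) • (lie_jacobi ⁅ρ x, ρ z⁆ (ρ y) x) +
      (-8 : F) • (lie_jacobi ⁅ρ y, x⁆ (ρ x) (ρ z)) +
      (-40 : F) • (lie_jacobi ⁅ρ y, x⁆ (ρ z) x) +
      (8 : F) • (lie_jacobi ⁅ρ y, x⁆ (ρ z) (ρ x)) +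
      (8 : F) • (lie_jacobi ⁅ρ y, ρ x⁆ x (ρ z)) +
      (-8 : F) • (lie_jacobi ⁅ρ y, ρ x⁆ (ρ z) x) +
      (5 : F) • aux94 +
      (-2 : F) • aux95 +
      (11 : F) • aux96 +
      (9 : F) • aux97 +
      (5 : F) • aux98 +
      (3 : F) • aux99 +
      (8 : F) • aux100 +
      (4 : F) • aux101 +
      (-4 : F) • aux102 +
      (24 : F) • aux103 +
      (20 : F) • aux104 +
      (34 : F) • aux105 +
      (16 : F) • aux106 +
      (36 : F) • aux107 +
      (-10 : F) • aux108 +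
      (6 : F) • aux109 +
      (-22 : F) • aux110 +
      (-18 : F) • aux111 +
      (56 : F) • aux112 +
      (58 : F) • aux113 +
      (28 : F) • aux114 +
      (8 : F) • aux115 +
      (-14 : F) • aux116 +
      (10 : F) • aux117 +
      (-8 : F) • aux118 +
      (14 : F) • aux119 +
      (-8 : F) • aux120 +
      (-2 : F) • aux121 +
      (-4 : F) • aux122 +
      (8 : F) • aux123 +
      (-2 : F) • aux124 +
      (-8 : F) • aux125 +
      (2 : F) • aux126 +
      (-6 : F) • aux127 +
      (-12 : F) • aux128
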